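/- Let G be a countable group containing a subgroup isomorphic to the free group F₂ on two generators. Then for every continuous action of G on a compact metrizable space X, there is a G-invariant compact subset Y ⊆ 2^G = {1,2}^G (with the shift action and product topology) and a continuous G-equivariant surjection from Y onto X. -/

import Mathlib

/-- The left shift action of `G` on the Bernoulli shift `K^G`. -/
def bshift {G : Type*} [Group G] (K : Type*) (g : G) (x : G → K) : G → K :=
  fun h => x (g⁻¹ * h)

section Code
variable {G : Type*} [Group G]

def Tc (ι : FreeGroup (Fin 2) →* G) : (G → Fin 2) → (G → Fin 2) :=
  fun x g => x (g * ι (FreeGroup.of 0)) - x g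

def Sc (ι : FreeGroup (Fin 2) →* G) : (G → Fin 2) → (G → Fin 2) :=
  fun x g => x (g * ι (FreeGroup.of 1)) - x g

lemma cont_sub2 : Continuous (fun p : Fin 2 × Fin 2 => p.1 - p.2) :=
  continuous_of_discreteTopology

lemma contTc (ι : FreeGroup (Fin 2) →* G) : Continuous (Tc ι) :=
  continuous_pi fun g =>
    (continuous_apply (g * ι (FreeGroup.of 0))).sub (continuous_apply g)

lemma contSc (ι : FreeGroup (Fin 2) →* G) : Continuous (Sc ι) :=
  continuous_pi fun g =>
    (continuous_apply (g * ι (FreeGroup.of 1))).sub (continuous_apply g)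

lemma Tc_equiv (ι : FreeGroup (Fin 2) →* G) (g : G) (x : G → Fin 2) :
    Tc ι (bshift (Fin 2) g x) = bshift (Fin 2) g (Tc ι x) := by
  funext h
  simp only [Tc, bshift, mul_assoc]

lemma Sc_equiv (ι : FreeGroup (Fin 2) →* G) (g : G) (x : G → Fin 2) :
    Sc ι (bshift (Fin 2) g x) = bshift (Fin 2) g (Sc ι x) := by
  funext h
  simp only [Sc, bshift, mul_assoc]

lemma Tc_iter_equiv (ι : FreeGroup (Fin 2) →* G) (g : G) (n : ℕ) (x : G → Fin 2) :
    (Tc ι)^[n] (bshift (Fin 2) g x) = bshift (Fin 2) g ((Tc ι)^[n] x) := by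
  induction n generalizing x with
  | zero => rfl
  | succ n ih =>
    rw [Function.iterate_succ_apply, Function.iterate_succ_apply, Tc_equiv, ih]
end Code

section Solv
variable {G : Type*} [Group G]

lemma exists_potential (ι : FreeGroup (Fin 2) →* G) (hι : Function.Injective ι)
    (w : Fin 2 → G → Fin 2) :
    ∃ x : G → Fin 2, ∀ i g, x (g * ι (FreeGroup.of i)) = x g + w i g := by
  classical
  set c : Fin 2 → G := fun i => ι (FreeGroup.of i) with hc
  -- basic permutations
  let τ : Fin 2 → Equiv.Perm (G × Fin 2) := fun i =>
    { toFun := fun p => (p.1 * c i, p.2 + w i p.1)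
      invFun := fun p => (p.1 * (c i)⁻¹, p.2 - w i (p.1 * (c i)⁻¹))
      left_inv := by intro p; simp
      right_inv := by intro p; simp }
  let A : FreeGroup (Fin 2) →* Equiv.Perm (G × Fin 2) := FreeGroup.lift (fun i => (τ i)⁻¹)
  have hAof : ∀ i, A (FreeGroup.of i) = (τ i)⁻¹ := fun i => FreeGroup.lift_apply_of
  have key1 : ∀ h : FreeGroup (Fin 2), ∀ p : G × Fin 2, (A h p).1 = p.1 * (ι h)⁻¹ := by
    intro h
    induction h with
    | C1 => intro p; simp
    | of i => intro p
              have : A (FreeGroup.of i) p = (τ i)⁻¹ p := by rw [hAof]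
              rw [this]
              rfl
    | inv_of i ih =>
                 intro p
                 have h3 := ih ((A (FreeGroup.of i))⁻¹ p)
                 rw [show ∀ (f : Equiv.Perm (G × Fin 2)) x, f (f⁻¹ x) = x from fun f x => f.apply_symm_apply x] at h3
                 have hq : ((A (FreeGroup.of i))⁻¹ p).1 = p.1 * ι (FreeGroup.of i) := by
                   rw [eq_mul_inv_iff_mul_eq] at h3; rw [h3]
                 rw [map_inv]
                 rw [hq, map_inv, inv_inv]
    | mul a b iha ihb =>
                 intro p
                 rw [map_mul, Equiv.Perm.mul_apply, iha, ihb, map_mul, mul_inv_rev, mul_assoc]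
  have hιinj : ∀ {h h' : FreeGroup (Fin 2)}, ι h = ι h' → h = h' := fun {h h'} e => hι e
  have U2 : ∀ (h h' : FreeGroup (Fin 2)) (p : G × Fin 2),
      (A h p).1 = (A h' p).1 → A h p = A h' p := by
    intro h h' p e
    rw [key1, key1] at e
    have : (ι h)⁻¹ = (ι h')⁻¹ := mul_left_cancel e
    have : h = h' := hιinj (inv_injective this)
    rw [this]
  -- setoid on G
  let sG : Setoid G :=
    ⟨fun g g' => ∃ h : FreeGroup (Fin 2), g * ι h = g', by
      constructor
      · intro g; exact ⟨1, by simp⟩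
      · rintro g g' ⟨h, rfl⟩; exact ⟨h⁻¹, by simp⟩
      · rintro g g' g'' ⟨h, rfl⟩ ⟨h', rfl⟩; exact ⟨h * h', by simp [mul_assoc]⟩⟩
  let rep : G → G := fun g => (Quotient.mk sG g).out
  have rep_r : ∀ g : G, ∃ h : FreeGroup (Fin 2), rep g * ι h = g := by
    intro g
    exact Quotient.exact (Quotient.out_eq (Quotient.mk sG g))
  have rep_mul : ∀ (g : G) (h : FreeGroup (Fin 2)), rep (g * ι h) = rep g := by
    intro g h
    have : Quotient.mk sG (g * ι h) = Quotient.mk sG g := Quotient.sound ⟨h⁻¹, by simp⟩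
    simp only [rep, this]
  let x : G → Fin 2 := fun g => (A ((rep_r g).choose)⁻¹ (rep g, 0)).2
  have xg_spec : ∀ g : G, A ((rep_r g).choose)⁻¹ (rep g, 0) = (g, x g) := by
    intro g
    have h1 : (A ((rep_r g).choose)⁻¹ (rep g, (0 : Fin 2))).1 = g := by
      rw [key1, map_inv, inv_inv, (rep_r g).choose_spec]
    exact Prod.ext h1 rfl
  refine ⟨x, fun i g => ?_⟩
  have hg' : rep (g * c i) = rep g := rep_mul g (FreeGroup.of i)
  have T1 : A ((rep_r (g * c i)).choose)⁻¹ (rep g, 0) = (g * c i, x (g * c i)) := by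
    rw [← hg']; exact xg_spec (g * c i)
  have T2 : A ((FreeGroup.of i)⁻¹ * ((rep_r g).choose)⁻¹) (rep g, 0)
      = (g * c i, x g + w i g) := by
    rw [map_mul, Equiv.Perm.mul_apply, xg_spec g, map_inv, hAof, inv_inv]
    rfl
  have e3 := U2 ((rep_r (g * c i)).choose)⁻¹
      ((FreeGroup.of i)⁻¹ * ((rep_r g).choose)⁻¹) (rep g, 0) (by rw [T1, T2])
  rw [T1, T2] at e3
  simpa [hc] using (Prod.ext_iff.mp e3).2
end Solv

section Code2
variable {G : Type*} [Group G]

lemma pair_surj (ι : FreeGroup (Fin 2) →* G) (hι : Function.Injective ι)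
    (u v : G → Fin 2) : ∃ x : G → Fin 2, Tc ι x = u ∧ Sc ι x = v := by
  obtain ⟨x, hx⟩ := exists_potential ι hι (fun i => if i = 0 then u else v)
  refine ⟨x, funext fun g => ?_, funext fun g => ?_⟩
  · have := hx 0 g
    simp only [if_pos rfl] at this
    simp [Tc, this]
  · have := hx 1 g
    norm_num at this
    simp [Sc, this]

def Psi (ι : FreeGroup (Fin 2) →* G) : (G → Fin 2) → (G → ℕ → Fin 2) :=
  fun x g n => Sc ι ((Tc ι)^[n] x) g

lemma contPsi (ι : FreeGroup (Fin 2) →* G) : Continuous (Psi ι) :=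
  continuous_pi fun g => continuous_pi fun n =>
    (continuous_apply g).comp ((contSc ι).comp ((contTc ι).iterate n))

lemma Psi_equiv (ι : FreeGroup (Fin 2) →* G) (g : G) (x : G → Fin 2) :
    Psi ι (bshift (Fin 2) g x) = bshift (ℕ → Fin 2) g (Psi ι x) := by
  funext h n
  simp only [Psi, Tc_iter_equiv, Sc_equiv, bshift]

lemma chain_surj (ι : FreeGroup (Fin 2) →* G) (hι : Function.Injective ι)
    (N : ℕ) : ∀ w : ℕ → G → Fin 2, ∃ x, ∀ k ≤ N, Sc ι ((Tc ι)^[k] x) = w k := by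
  induction N with
  | zero =>
    intro w
    obtain ⟨x, _, hS⟩ := pair_surj ι hι (fun _ => 0) (w 0)
    exact ⟨x, fun k hk => by rw [Nat.le_zero.mp hk]; exact hS⟩
  | succ N ih =>
    intro w
    obtain ⟨y, hy⟩ := ih (fun k => w (k + 1))
    obtain ⟨x, hT, hS⟩ := pair_surj ι hι y (w 0)
    refine ⟨x, fun k hk => ?_⟩
    cases k with
    | zero => exact hS
    | succ j =>
      rw [Function.iterate_succ_apply, hT]
      exact hy j (Nat.succ_le_succ_iff.mp hk)

lemma Psi_surj (ι : FreeGroup (Fin 2) →* G) (hι : Function.Injective ι) :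
    Function.Surjective (Psi ι) := by
  intro w
  set w' : ℕ → G → Fin 2 := fun n g => w g n with hw'
  set U : ℕ → Set (G → Fin 2) :=
    fun n => {x | ∀ k ≤ n, Sc ι ((Tc ι)^[k] x) = w' k} with hU
  have hclosed : ∀ n, IsClosed (U n) := by
    intro n
    have : U n = ⋂ (k : ℕ) (_ : k ≤ n), {x | Sc ι ((Tc ι)^[k] x) = w' k} := by
      ext x; simp [hU, Set.mem_iInter]
    rw [this]
    refine isClosed_iInter fun k => isClosed_iInter fun _ => ?_
    exact isClosed_eq ((contSc ι).comp ((contTc ι).iterate k)) continuous_const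
  have hne : ∀ n, (U n).Nonempty := fun n => chain_surj ι hι n w'
  have hdec : ∀ n, U (n + 1) ⊆ U n := fun n x hx k hk => hx k (hk.trans (Nat.le_succ n))
  have hcomp : IsCompact (U 0) := (hclosed 0).isCompact
  obtain ⟨x, hx⟩ := IsCompact.nonempty_iInter_of_sequence_nonempty_isCompact_isClosed
    U hdec hne hcomp hclosed
  refine ⟨x, funext fun g => funext fun n => ?_⟩
  have := (Set.mem_iInter.mp hx n) n le_rfl
  exact congrFun this g
end Code2

noncomputable section CantorSec

def bin (σ : ℕ → Fin 2) : ℝ := ∑' n, ((σ n : ℕ) : ℝ) * (1/2) ^ (n+1)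

lemma sumG : Summable fun n : ℕ => ((1:ℝ)/2) ^ (n+1) := by
  have := summable_geometric_two.mul_right ((1:ℝ)/2)
  simpa [pow_succ] using this

lemma tsumG : ∑' n : ℕ, ((1:ℝ)/2) ^ (n+1) = 1 := by
  have h := tsum_geometric_two' 1
  have h2 : ∑' n : ℕ, ((1:ℝ)/2) ^ (n+1) = ∑' n : ℕ, 1/2/2^n := by
    apply tsum_congr
    intro n
    rw [pow_succ, one_div, inv_pow]
    field_simp
  rw [h2, h]

lemma bin_term_nonneg (σ : ℕ → Fin 2) (n : ℕ) : 0 ≤ ((σ n : ℕ) : ℝ) * (1/2) ^ (n+1) := by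
  positivity

lemma bin_term_le (σ : ℕ → Fin 2) (n : ℕ) :
    ((σ n : ℕ) : ℝ) * (1/2) ^ (n+1) ≤ ((1:ℝ)/2) ^ (n+1) := by
  have h : ((σ n : ℕ) : ℝ) ≤ 1 := by
    have := (σ n).isLt
    have h2 : (σ n : ℕ) ≤ 1 := Nat.lt_succ_iff.mp this
    exact_mod_cast h2
  nlinarith [pow_pos (by norm_num : (0:ℝ) < 1/2) (n+1)]

lemma bin_summable (σ : ℕ → Fin 2) :
    Summable fun n => ((σ n : ℕ) : ℝ) * (1/2) ^ (n+1) :=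
  Summable.of_nonneg_of_le (bin_term_nonneg σ) (bin_term_le σ) sumG

lemma bin_nonneg (σ : ℕ → Fin 2) : 0 ≤ bin σ :=
  tsum_nonneg (bin_term_nonneg σ)

lemma bin_le_one (σ : ℕ → Fin 2) : bin σ ≤ 1 := by
  have := Summable.tsum_le_tsum (bin_term_le σ) (bin_summable σ) sumG
  rwa [tsumG] at this

lemma bin_cont : Continuous bin := by
  apply continuous_tsum (u := fun n => ((1:ℝ)/2)^(n+1)) _ sumG
  · intro n σ
    rw [Real.norm_eq_abs, abs_of_nonneg (bin_term_nonneg σ n)]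
    exact bin_term_le σ n
  · intro n
    have h1 : Continuous fun v : Fin 2 => ((v : ℕ) : ℝ) * (1/2:ℝ)^(n+1) :=
      continuous_of_discreteTopology
    exact h1.comp (continuous_apply n)

lemma bin_surj (t : ℝ) (h0 : 0 ≤ t) (h1 : t ≤ 1) : ∃ σ : ℕ → Fin 2, bin σ = t := by
  classical
  let f : ℕ → ℝ := fun n =>
    Nat.rec 0 (fun n s => s + if s + (1/2)^(n+1) ≤ t then (1/2:ℝ)^(n+1) else 0) n
  have hfs : ∀ n, f (n+1) = f n + if f n + (1/2)^(n+1) ≤ t then (1/2:ℝ)^(n+1) else 0 :=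
    fun n => rfl
  have hf0 : f 0 = 0 := rfl
  let σ : ℕ → Fin 2 := fun n => if f n + (1/2)^(n+1) ≤ t then 1 else 0
  have inv : ∀ n, f n ≤ t ∧ t ≤ f n + (1/2)^n := by
    intro n
    induction n with
    | zero => rw [hf0]; norm_num; exact ⟨h0, h1⟩
    | succ n ih =>
      rw [hfs]
      by_cases hc : f n + (1/2)^(n+1) ≤ t
      · rw [if_pos hc]
        refine ⟨hc, ?_⟩
        have := ih.2
        have hp : ((1:ℝ)/2)^n = (1/2)^(n+1) + (1/2)^(n+1) := by ring
        linarith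
      · rw [if_neg hc]
        push_neg at hc
        exact ⟨by linarith [ih.1], by linarith⟩
  have hpartial : ∀ N, ∑ i ∈ Finset.range N, ((σ i : ℕ) : ℝ) * (1/2)^(i+1) = f N := by
    intro N
    induction N with
    | zero => rw [hf0]; simp
    | succ N ih =>
      rw [Finset.sum_range_succ, ih, hfs]
      by_cases hc : f N + (1/2)^(N+1) ≤ t
      · simp only [σ, if_pos hc]
        norm_num
      · simp only [σ, if_neg hc]
        norm_num
  have htend : Filter.Tendsto f Filter.atTop (nhds t) := by
    have hlow : Filter.Tendsto (fun n : ℕ => t - ((1:ℝ)/2)^n) Filter.atTop (nhds t) := by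
      have := tendsto_pow_atTop_nhds_zero_of_lt_one (by norm_num : (0:ℝ) ≤ 1/2)
        (by norm_num : (1:ℝ)/2 < 1)
      simpa using Filter.Tendsto.sub tendsto_const_nhds this
    refine tendsto_of_tendsto_of_tendsto_of_le_of_le hlow tendsto_const_nhds
      (fun n => by linarith [(inv n).2]) (fun n => (inv n).1)
  refine ⟨σ, ?_⟩
  have : HasSum (fun n => ((σ n : ℕ) : ℝ) * (1/2)^(n+1)) t := by
    rw [hasSum_iff_tendsto_nat_of_nonneg (bin_term_nonneg σ)]
    convert htend using 1
    funext N
    exact hpartial N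
  exact this.tsum_eq

def scode (ω : ℕ → Fin 2) : ℕ → ℝ := fun m => bin (fun n => ω (Nat.pair m n))

lemma scode_cont : Continuous scode := by
  refine continuous_pi fun m => ?_
  exact bin_cont.comp (continuous_pi fun n => continuous_apply (Nat.pair m n))

lemma scode_surj (y : ℕ → ℝ) (hy : ∀ m, y m ∈ Set.Icc (0:ℝ) 1) :
    ∃ ω, scode ω = y := by
  classical
  choose σ hσ using fun m => bin_surj (y m) (hy m).1 (hy m).2
  refine ⟨fun k => σ (Nat.unpair k).1 (Nat.unpair k).2, funext fun m => ?_⟩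
  simp only [scode, Nat.unpair_pair]
  exact hσ m

end CantorSec


theorem stmt4 (G : Type*) [Group G] [Countable G]
    (ι : FreeGroup (Fin 2) →* G) (hι : Function.Injective ι) :
    ∀ (X : Type) [TopologicalSpace X] [CompactSpace X]
      [TopologicalSpace.MetrizableSpace X] [MulAction G X],
      (∀ g : G, Continuous fun x : X => g • x) →
      ∃ Y : Set (G → Fin 2), IsCompact Y ∧
        (∀ (g : G) (x : G → Fin 2), x ∈ Y → bshift (Fin 2) g x ∈ Y) ∧
        ∃ φ : Y → X, Continuous φ ∧ Function.Surjective φ ∧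
          ∀ (g : G) (x : G → Fin 2) (hx : x ∈ Y) (hgx : bshift (Fin 2) g x ∈ Y),
            φ ⟨bshift (Fin 2) g x, hgx⟩ = g • φ ⟨x, hx⟩ := by
  intro X _ _ _ _ hcont
  classical
  rcases isEmpty_or_nonempty X with hX | hX
  · refine ⟨∅, isCompact_empty, fun g x hx => absurd hx (Set.notMem_empty x),
      fun y => isEmptyElim y, ?_, fun x => isEmptyElim x, ?_⟩
    · exact continuous_def.mpr fun s _ => by
        rw [Set.eq_empty_of_isEmpty ((fun y : (∅ : Set (G → Fin 2)) => isEmptyElim y : _ → X) ⁻¹' s)]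
        exact isOpen_empty
    · intro g x hx; exact absurd hx (Set.notMem_empty x)
  · letI : MetricSpace X := TopologicalSpace.metrizableSpaceMetric X
    haveI : TopologicalSpace.SeparableSpace X :=
      TopologicalSpace.isSeparable_univ_iff.mp (isCompact_univ.isSeparable)
    set d : ℕ → X := TopologicalSpace.denseSeq X with hdd
    have hd : DenseRange d := TopologicalSpace.denseRange_denseSeq X
    set e : X → ℕ → ℝ := fun x m => dist x (d m) / (1 + dist x (d m)) with hee
    have hdistpos : ∀ (x : X) (m : ℕ), (0:ℝ) < 1 + dist x (d m) := by
      intro x m; have := dist_nonneg (x := x) (y := d m); linarith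
    have he_cont : Continuous e := by
      refine continuous_pi fun m => Continuous.div ?_ ?_ ?_
      · exact continuous_id.dist continuous_const
      · exact continuous_const.add (continuous_id.dist continuous_const)
      · intro x; exact ne_of_gt (hdistpos x m)
    have he_mem : ∀ (x : X) (m : ℕ), e x m ∈ Set.Icc (0:ℝ) 1 := by
      intro x m
      constructor
      · exact div_nonneg dist_nonneg (le_of_lt (hdistpos x m))
      · rw [div_le_one (hdistpos x m)]; linarith [dist_nonneg (x := x) (y := d m)]
    have he_inj : Function.Injective e := by
      intro x y hxy
      have key : ∀ m, dist x (d m) = dist y (d m) := by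
        intro m
        have h := congrFun hxy m
        simp only [hee] at h
        have h1 := hdistpos x m
        have h2 := hdistpos y m
        field_simp at h
        nlinarith
      apply eq_of_forall_dist_le
      intro ε hε
      obtain ⟨k, hk⟩ := hd.exists_dist_lt x (by linarith : (0:ℝ) < ε/2)
      have h2 : dist y (d k) < ε/2 := by rw [← key k]; exact hk
      calc dist x y ≤ dist x (d k) + dist (d k) y := dist_triangle _ _ _
        _ = dist x (d k) + dist y (d k) := by rw [dist_comm (d k) y]
        _ ≤ ε := by linarith
    -- the closed equivariant "graph" set
    set Z : Set ((G → (ℕ → Fin 2)) × X) :=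
      {p | ∀ g : G, scode (p.1 g) = e (g⁻¹ • p.2)} with hZZ
    have hZclosed : IsClosed Z := by
      have : Z = ⋂ g : G, {p : (G → (ℕ → Fin 2)) × X | scode (p.1 g) = e (g⁻¹ • p.2)} := by
        ext p; simp [hZZ, Set.mem_iInter]
      rw [this]
      refine isClosed_iInter fun g => isClosed_eq ?_ ?_
      · exact scode_cont.comp ((continuous_apply g).comp continuous_fst)
      · exact he_cont.comp ((hcont g⁻¹).comp continuous_snd)
    have hZcomp : IsCompact Z := hZclosed.isCompact
    set Y' : Set (G → (ℕ → Fin 2)) := Prod.fst '' Z with hYY'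
    have hY'comp : IsCompact Y' := hZcomp.image continuous_fst
    have hZuniq : ∀ (w : G → (ℕ → Fin 2)) (x x' : X), (w, x) ∈ Z → (w, x') ∈ Z → x = x' := by
      intro w x x' h1 h2
      have e1 := h1 1
      have e2 := h2 1
      simp only [inv_one, one_smul] at e1 e2
      exact he_inj (e1 ▸ e2 ▸ rfl)
    have hZinv : ∀ (γ : G) (p : (G → (ℕ → Fin 2)) × X), p ∈ Z →
        (bshift (ℕ → Fin 2) γ p.1, γ • p.2) ∈ Z := by
      intro γ p hp g
      have h := hp (γ⁻¹ * g)
      simp only [bshift]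
      rw [h, smul_smul, mul_inv_rev, inv_inv]
    haveI : CompactSpace Z := isCompact_iff_compactSpace.mp hZcomp
    set pZ : Z → Y' := fun z => ⟨z.1.1, ⟨z.1, z.2, rfl⟩⟩ with hpZ
    have hpZcont : Continuous pZ :=
      Continuous.subtype_mk (continuous_fst.comp continuous_subtype_val) _
    have hpZbij : Function.Bijective pZ := by
      constructor
      · rintro ⟨⟨w, x⟩, hz⟩ ⟨⟨w', x'⟩, hz'⟩ h
        have hw : w = w' := congrArg Subtype.val h
        subst hw
        have : x = x' := hZuniq w x x' hz hz'
        subst this; rfl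
      · rintro ⟨w, p, hp, hfst⟩
        exact ⟨⟨p, hp⟩, Subtype.ext hfst⟩
    set E : Z ≃ Y' := Equiv.ofBijective pZ hpZbij with hEE
    have hEcont : Continuous E := hpZcont
    set Hm : Z ≃ₜ Y' := Continuous.homeoOfEquivCompactToT2 (f := E) hEcont with hHm
    set ψ : Y' → X := fun w => ((Hm.symm w : Z) : (G → (ℕ → Fin 2)) × X).2 with hψψ
    have hψcont : Continuous ψ :=
      continuous_snd.comp (continuous_subtype_val.comp Hm.symm.continuous)
    have hψmem : ∀ w : Y', ((w : G → (ℕ → Fin 2)), ψ w) ∈ Z := by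
      intro w
      have h1 : pZ (Hm.symm w) = w := Hm.apply_symm_apply w
      have h2 : ((Hm.symm w : Z) : (G → (ℕ → Fin 2)) × X).1 = (w : G → (ℕ → Fin 2)) :=
        congrArg Subtype.val h1
      have h3 := (Hm.symm w).2
      rw [show ((Hm.symm w : Z) : (G → (ℕ → Fin 2)) × X)
          = (((Hm.symm w : Z) : (G → (ℕ → Fin 2)) × X).1,
             ((Hm.symm w : Z) : (G → (ℕ → Fin 2)) × X).2) from rfl, h2] at h3
      exact h3
    have hψuniq : ∀ (w : Y') (x : X), ((w : G → (ℕ → Fin 2)), x) ∈ Z → ψ w = x :=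
      fun w x h => hZuniq _ _ _ (hψmem w) h
    have hψsurj : ∀ x : X, ∃ w : Y', ψ w = x := by
      intro x
      have hw : ∀ g : G, ∃ ω : ℕ → Fin 2, scode ω = e (g⁻¹ • x) :=
        fun g => scode_surj _ (fun m => he_mem _ m)
      choose w hwspec using hw
      have hZm : (w, x) ∈ Z := fun g => hwspec g
      exact ⟨⟨w, ⟨(w, x), hZm, rfl⟩⟩, hψuniq _ _ hZm⟩
    have hY'inv : ∀ (γ : G) (w : G → (ℕ → Fin 2)), w ∈ Y' →
        bshift (ℕ → Fin 2) γ w ∈ Y' := by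
      rintro γ w ⟨p, hp, rfl⟩
      exact ⟨(bshift (ℕ → Fin 2) γ p.1, γ • p.2), hZinv γ p hp, rfl⟩
    -- pull back along Psi
    refine ⟨Psi ι ⁻¹' Y', ?_, ?_, ?_⟩
    · exact (IsClosed.preimage (contPsi ι) hY'comp.isClosed).isCompact
    · intro g x hx
      have : Psi ι (bshift (Fin 2) g x) = bshift (ℕ → Fin 2) g (Psi ι x) := Psi_equiv ι g x
      simp only [Set.mem_preimage, this]
      exact hY'inv g _ hx
    · refine ⟨fun y => ψ ⟨Psi ι y.1, y.2⟩, ?_, ?_, ?_⟩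
      · exact hψcont.comp (Continuous.subtype_mk ((contPsi ι).comp continuous_subtype_val) _)
      · intro x
        obtain ⟨w, hwx⟩ := hψsurj x
        obtain ⟨z, hz⟩ := Psi_surj ι hι w.1
        have hzY : z ∈ Psi ι ⁻¹' Y' := by
          simp only [Set.mem_preimage, hz]; exact w.2
        refine ⟨⟨z, hzY⟩, ?_⟩
        have h5 : (⟨Psi ι z, hzY⟩ : Y') = w := Subtype.ext hz
        show ψ ⟨Psi ι z, hzY⟩ = x
        rw [h5, hwx]
      · intro g x hx hgx
        have hEq : Psi ι (bshift (Fin 2) g x) = bshift (ℕ → Fin 2) g (Psi ι x) :=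
          Psi_equiv ι g x
        have hmem2 : bshift (ℕ → Fin 2) g (Psi ι x) ∈ Y' := hEq ▸ hgx
        have h1 : (⟨Psi ι (bshift (Fin 2) g x), hgx⟩ : Y')
            = ⟨bshift (ℕ → Fin 2) g (Psi ι x), hmem2⟩ := Subtype.ext hEq
        show ψ ⟨Psi ι (bshift (Fin 2) g x), hgx⟩ = g • ψ ⟨Psi ι x, hx⟩
        rw [h1]
        apply hψuniq
        exact hZinv g (Psi ι x, ψ ⟨Psi ι x, hx⟩) (hψmem ⟨Psi ι x, hx⟩)
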